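/- Any two nontrivial, countable, locally finite, existentially closed Heyting algebras are isomorphic as Heyting algebras (there is a bijective map between them preserving ⊥, ⊤, ⊓, ⊔, ⇨). -/

import Mathlib

/-- Formal Heyting terms in `n` variables. -/
inductive HeytingTerm (n : ℕ) : Type
  | var : Fin n → HeytingTerm n
  | bot : HeytingTerm n
  | top : HeytingTerm n
  | inf : HeytingTerm n → HeytingTerm n → HeytingTerm n
  | sup : HeytingTerm n → HeytingTerm n → HeytingTerm n
  | himp : HeytingTerm n → HeytingTerm n → HeytingTerm n

namespace HeytingTerm

/-- Evaluation of a Heyting term in a Heyting algebra. -/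
def eval {n : ℕ} {H : Type*} [HeytingAlgebra H] (v : Fin n → H) : HeytingTerm n → H
  | var i => v i
  | bot => ⊥
  | top => ⊤
  | inf a b => a.eval v ⊓ b.eval v
  | sup a b => a.eval v ⊔ b.eval v
  | himp a b => a.eval v ⇨ b.eval v

/-- The degree of a Heyting term: the maximal number of nested occurrences of `⇨`. -/
def degree {n : ℕ} : HeytingTerm n → ℕ
  | var _ => 0
  | bot => 0
  | top => 0
  | inf a b => max a.degree b.degree
  | sup a b => max a.degree b.degree
  | himp a b => max a.degree b.degree + 1

end HeytingTerm

/-- `b` is a solution of the system `(t, s₁, …, s_κ)` with parameters `a`. -/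
def IsSolution {l m κ : ℕ} {H : Type*} [HeytingAlgebra H]
    (t : HeytingTerm (l + m)) (s : Fin κ → HeytingTerm (l + m))
    (a : Fin l → H) (b : Fin m → H) : Prop :=
  t.eval (Fin.append a b) = ⊤ ∧ ∀ k, (s k).eval (Fin.append a b) ≠ ⊤

/-- The system `(t, s₁, …, s_κ)` with parameters `a` has a solution in `H`. -/
def HasSolution {l m κ : ℕ} {H : Type*} [HeytingAlgebra H]
    (t : HeytingTerm (l + m)) (s : Fin κ → HeytingTerm (l + m)) (a : Fin l → H) : Prop :=
  ∃ b : Fin m → H, IsSolution t s a b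

/-- A Heyting algebra is existentially closed if every system with parameters in `H`
having a solution in an extension of `H` already has a solution in `H`. -/
def IsExtClosed (H : Type*) [HeytingAlgebra H] : Prop :=
  ∀ (K : Type*) [HeytingAlgebra K] (f : HeytingHom H K), Function.Injective f →
    ∀ {l m κ : ℕ} (t : HeytingTerm (l + m)) (s : Fin κ → HeytingTerm (l + m)) (a : Fin l → H),
      HasSolution t s (fun i => f (a i)) → HasSolution t s a

/-- A Heyting subalgebra: a subset containing `⊥`, `⊤` and closed under `⊓`, `⊔`, `⇨`. -/
structure HeytingSubalgebra (H : Type*) [HeytingAlgebra H] where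
  carrier : Set H
  bot_mem : ⊥ ∈ carrier
  top_mem : ⊤ ∈ carrier
  inf_mem : ∀ {a b : H}, a ∈ carrier → b ∈ carrier → a ⊓ b ∈ carrier
  sup_mem : ∀ {a b : H}, a ∈ carrier → b ∈ carrier → a ⊔ b ∈ carrier
  himp_mem : ∀ {a b : H}, a ∈ carrier → b ∈ carrier → a ⇨ b ∈ carrier

/-- A Heyting algebra is locally finite if every finite subset is contained in a finite
subalgebra. -/
def LocallyFiniteHA (H : Type*) [HeytingAlgebra H] : Prop :=
  ∀ s : Finset H, ∃ S : HeytingSubalgebra H, S.carrier.Finite ∧ ↑s ⊆ S.carrier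


open Function

namespace HeytingTerm

theorem eval_hom {n : ℕ} {H K : Type*} [HeytingAlgebra H] [HeytingAlgebra K]
    (g : HeytingHom H K) (v : Fin n → H) :
    ∀ t : HeytingTerm n, g (t.eval v) = t.eval (fun i => g (v i))
  | var _ => rfl
  | bot => map_bot g
  | top => map_top g
  | inf a b => by simp only [eval, map_inf, eval_hom g v a, eval_hom g v b]
  | sup a b => by simp only [eval, map_sup, eval_hom g v a, eval_hom g v b]
  | himp a b => by simp only [eval, map_himp, eval_hom g v a, eval_hom g v b]

/-- Bi-implication term. -/
def biimp {n : ℕ} (u v : HeytingTerm n) : HeytingTerm n := .inf (.himp u v) (.himp v u)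

theorem biimp_eval_eq_top {n : ℕ} {H : Type*} [HeytingAlgebra H] {u v : HeytingTerm n}
    {w : Fin n → H} : (biimp u v).eval w = ⊤ ↔ u.eval w = v.eval w := by
  simp only [biimp, eval, inf_eq_top_iff, himp_eq_top_iff]
  exact ⟨fun h => le_antisymm h.1 h.2, fun h => ⟨h.le, h.ge⟩⟩

/-- Conjunction of a list of terms. -/
def conjList {n : ℕ} : List (HeytingTerm n) → HeytingTerm n
  | [] => .top
  | u :: L => .inf u (conjList L)

theorem conjList_eval_eq_top {n : ℕ} {H : Type*} [HeytingAlgebra H] {w : Fin n → H} :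
    ∀ {L : List (HeytingTerm n)}, (conjList L).eval w = ⊤ ↔ ∀ u ∈ L, u.eval w = ⊤
  | [] => by simp [conjList, eval]
  | u :: L => by simp [conjList, eval, inf_eq_top_iff, conjList_eval_eq_top (L := L)]

end HeytingTerm

theorem comp_fin_append {l m : ℕ} {H K : Type*} (g : H → K) (a : Fin l → H) (b : Fin m → H) :
    (fun i => g (Fin.append a b i)) = Fin.append (fun i => g (a i)) (fun k => g (b k)) := by
  funext i
  refine Fin.addCases (fun i => ?_) (fun k => ?_) i <;>
    simp [Fin.append_left, Fin.append_right]

theorem IsSolution.map_iff {l m κ : ℕ} {H K : Type*} [HeytingAlgebra H] [HeytingAlgebra K]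
    (g : HeytingHom H K) (hg : Function.Injective g)
    {t : HeytingTerm (l + m)} {s : Fin κ → HeytingTerm (l + m)}
    {a : Fin l → H} {b : Fin m → H} :
    IsSolution t s (fun i => g (a i)) (fun k => g (b k)) ↔ IsSolution t s a b := by
  have key : ∀ u : HeytingTerm (l + m),
      u.eval (Fin.append (fun i => g (a i)) (fun k => g (b k))) = ⊤ ↔
        u.eval (Fin.append a b) = ⊤ := by
    intro u
    rw [← comp_fin_append g a b, ← HeytingTerm.eval_hom]
    constructor
    · intro h; apply hg; rw [h, map_top]
    · intro h; rw [h, map_top]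
  unfold IsSolution
  simp only [key, ne_eq]

namespace HeytingSubalgebra

variable {H : Type*} [HeytingAlgebra H] (S : HeytingSubalgebra H)

instance : Min S.carrier := ⟨fun x y => ⟨x.1 ⊓ y.1, S.inf_mem x.2 y.2⟩⟩
instance : Max S.carrier := ⟨fun x y => ⟨x.1 ⊔ y.1, S.sup_mem x.2 y.2⟩⟩
instance : Top S.carrier := ⟨⟨⊤, S.top_mem⟩⟩
instance : Bot S.carrier := ⟨⟨⊥, S.bot_mem⟩⟩
instance : HImp S.carrier := ⟨fun x y => ⟨x.1 ⇨ y.1, S.himp_mem x.2 y.2⟩⟩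
instance : Compl S.carrier := ⟨fun x => ⟨x.1 ⇨ ⊥, S.himp_mem x.2 S.bot_mem⟩⟩

instance : HeytingAlgebra S.carrier :=
  Subtype.val_injective.heytingAlgebra _ Iff.rfl Iff.rfl (fun _ _ => rfl) (fun _ _ => rfl) rfl rfl
    (fun a => (himp_bot a.1).symm ▸ rfl) (fun _ _ => rfl)

@[simp] theorem val_inf (x y : S.carrier) : ((x ⊓ y : S.carrier) : H) = x.1 ⊓ y.1 := rfl
@[simp] theorem val_sup (x y : S.carrier) : ((x ⊔ y : S.carrier) : H) = x.1 ⊔ y.1 := rfl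
@[simp] theorem val_himp (x y : S.carrier) : ((x ⇨ y : S.carrier) : H) = x.1 ⇨ y.1 := rfl
@[simp] theorem val_top : ((⊤ : S.carrier) : H) = ⊤ := rfl
@[simp] theorem val_bot : ((⊥ : S.carrier) : H) = ⊥ := rfl

/-- The inclusion of a Heyting subalgebra. -/
def incl : HeytingHom S.carrier H where
  toFun := Subtype.val
  map_sup' _ _ := rfl
  map_inf' _ _ := rfl
  map_bot' := rfl
  map_himp' _ _ := rfl

@[simp] theorem incl_apply (x : S.carrier) : S.incl x = x.1 := rfl

theorem incl_injective : Function.Injective S.incl := Subtype.val_injective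

/-- Corestriction of a Heyting homomorphism to a subalgebra containing its range. -/
def codRestrict {A : Type*} [HeytingAlgebra A] (g : HeytingHom A H)
    (h : ∀ a, g a ∈ S.carrier) : HeytingHom A S.carrier where
  toFun a := ⟨g a, h a⟩
  map_sup' a b := by ext; simp [map_sup]
  map_inf' a b := by ext; simp [map_inf]
  map_bot' := by ext; simp [map_bot]
  map_himp' a b := by ext; simp [map_himp]

@[simp] theorem codRestrict_apply {A : Type*} [HeytingAlgebra A] (g : HeytingHom A H)
    (h : ∀ a, g a ∈ S.carrier) (a : A) : (S.codRestrict g h a : H) = g a := rfl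

end HeytingSubalgebra
/-- A prime filter of a Heyting algebra. -/
structure PrimeF (H : Type*) [HeytingAlgebra H] where
  s : Set H
  top_mem : ⊤ ∈ s
  bot_nmem : ⊥ ∉ s
  mem_of_le : ∀ {x y : H}, x ∈ s → x ≤ y → y ∈ s
  inf_mem : ∀ {x y : H}, x ∈ s → y ∈ s → x ⊓ y ∈ s
  prime : ∀ {x y : H}, x ⊔ y ∈ s → x ∈ s ∨ y ∈ s

namespace PrimeF

variable {H : Type*} [HeytingAlgebra H]

theorem ext' {P Q : PrimeF H} (h : P.s = Q.s) : P = Q := by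
  cases P; cases Q; simpa using h

/-- The prime filter separation theorem: a filter can be extended to a prime filter
avoiding a given element not above any member of the filter. -/
theorem dpi (F : Set H) (hne : F.Nonempty)
    (hup : ∀ {x y : H}, x ∈ F → x ≤ y → y ∈ F)
    (hinf : ∀ {x y : H}, x ∈ F → y ∈ F → x ⊓ y ∈ F)
    (c : H) (hc : ∀ x ∈ F, ¬x ≤ c) :
    ∃ P : PrimeF H, F ⊆ P.s ∧ c ∉ P.s := by
  have hpf : Order.IsPFilter F :=
    Order.IsPFilter.of_def hne
      (fun x hx y hy => ⟨x ⊓ y, hinf hx hy, inf_le_left, inf_le_right⟩)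
      (fun h hx => hup hx h)
  set Fp : Order.PFilter H := hpf.toPFilter with hFp
  have hFpc : (Fp : Set H) = F := rfl
  have hdisj : Disjoint (Fp : Set H) ((Order.Ideal.principal c : Order.Ideal H) : Set H) := by
    rw [Set.disjoint_left]
    intro x hx hxc
    exact hc x (by rwa [hFpc] at hx) (by simpa using hxc)
  obtain ⟨J, hJprime, hJle, hJdisj⟩ :=
    DistribLattice.prime_ideal_of_disjoint_filter_ideal hdisj
  refine ⟨⟨(J : Set H)ᶜ, ?_, ?_, ?_, ?_, ?_⟩, ?_, ?_⟩
  · exact hJprime.toIsProper.top_notMem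
  · simpa using J.bot_mem
  · intro x y hx hxy hy
    exact hx (J.lower hxy hy)
  · intro x y hx hy hmem
    rcases hJprime.mem_or_mem hmem with h | h
    · exact hx h
    · exact hy h
  · intro x y hxy
    by_contra hcon
    push_neg at hcon
    simp only [Set.mem_compl_iff, not_not] at hcon
    exact hxy (Order.Ideal.sup_mem hcon.1 hcon.2)
  · intro x hx
    exact Set.disjoint_left.mp hJdisj (by rwa [hFpc])
  · simp only [Set.mem_compl_iff, not_not]
    exact hJle (by simpa using le_refl c)

end PrimeF
namespace PrimeF

variable {H : Type*} [HeytingAlgebra H]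

/-- Pull back a prime filter along a Heyting homomorphism. -/
def comap {A : Type*} [HeytingAlgebra A] (i : HeytingHom A H) (P : PrimeF H) : PrimeF A where
  s := i ⁻¹' P.s
  top_mem := by simp only [Set.mem_preimage, map_top]; exact P.top_mem
  bot_nmem := by simp only [Set.mem_preimage, map_bot]; exact P.bot_nmem
  mem_of_le hx hxy := P.mem_of_le hx (OrderHomClass.mono i hxy)
  inf_mem hx hy := by
    simp only [Set.mem_preimage, map_inf]; exact P.inf_mem hx hy
  prime h := P.prime (by simpa only [Set.mem_preimage, map_sup] using h)

@[simp] theorem mem_comap {A : Type*} [HeytingAlgebra A] (i : HeytingHom A H) (P : PrimeF H)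
    (a : A) : a ∈ (comap i P).s ↔ i a ∈ P.s := Iff.rfl

section Finite

variable {A : Type*} [HeytingAlgebra A] [Fintype A]

theorem finset_inf_mem (P : PrimeF A) (t : Finset A) (h : ∀ x ∈ t, x ∈ P.s) :
    t.inf id ∈ P.s := by
  classical
  induction t using Finset.induction_on with
  | empty => simpa using P.top_mem
  | insert _ _ hx ih =>
    rw [Finset.inf_insert]
    exact P.inf_mem (h _ (Finset.mem_insert_self _ _))
      (ih fun x hx' => h _ (Finset.mem_insert_of_mem hx'))

theorem finset_sup_nmem (P : PrimeF A) (t : Finset A) (h : ∀ x ∈ t, x ∉ P.s) :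
    t.sup id ∉ P.s := by
  classical
  induction t using Finset.induction_on with
  | empty => simpa using P.bot_nmem
  | insert _ _ hx ih =>
    rw [Finset.sup_insert]
    intro hmem
    rcases P.prime hmem with hmem' | hmem'
    · exact h _ (Finset.mem_insert_self _ _) hmem'
    · exact ih (fun x hx' => h _ (Finset.mem_insert_of_mem hx')) hmem'

open scoped Classical in
/-- The minimum of a prime filter in a finite Heyting algebra. -/
noncomputable def pmin (P : PrimeF A) : A := (Set.toFinset P.s).inf id

open scoped Classical in
/-- The maximum of the complement of a prime filter in a finite Heyting algebra. -/
noncomputable def pmax (P : PrimeF A) : A := (Set.toFinset P.sᶜ).sup id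

theorem pmin_mem (P : PrimeF A) : P.pmin ∈ P.s := by
  classical exact P.finset_inf_mem _ (fun x hx => by simpa using (Set.mem_toFinset.mp hx))

theorem pmin_le (P : PrimeF A) {x : A} (hx : x ∈ P.s) : P.pmin ≤ x := by
  classical exact Finset.inf_le (by simpa using Set.mem_toFinset.mpr hx)

theorem pmax_nmem (P : PrimeF A) : P.pmax ∉ P.s := by
  classical exact P.finset_sup_nmem _ (fun x hx => by simpa using (Set.mem_toFinset.mp hx))

theorem le_pmax (P : PrimeF A) {x : A} (hx : x ∉ P.s) : x ≤ P.pmax := by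
  classical exact Finset.le_sup (f := id) (Set.mem_toFinset.mpr hx)

variable {C : Type*} [HeytingAlgebra C]

/-- Every prime filter of a finite subalgebra is the restriction of a prime filter. -/
theorem exists_comap_eq (j : HeytingHom A C) (hj : Function.Injective j) (P : PrimeF A) :
    ∃ G : PrimeF C, comap j G = P := by
  have hnl : ¬j P.pmin ≤ j P.pmax := by
    intro hle
    have : P.pmin ≤ P.pmax := by
      have : j (P.pmin ⊓ P.pmax) = j P.pmin := by rw [map_inf, inf_eq_left.mpr hle]
      have := hj this
      exact inf_eq_left.mp this
    exact P.pmax_nmem (P.mem_of_le P.pmin_mem this)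
  obtain ⟨G, hG1, hG2⟩ := dpi {x : C | j P.pmin ≤ x} ⟨j P.pmin, le_refl _⟩
    (fun hx hxy => le_trans hx hxy) (fun hx hy => le_inf hx hy) (j P.pmax)
    (fun x hx hxc => hnl (le_trans hx hxc))
  refine ⟨G, ext' ?_⟩
  ext x
  simp only [mem_comap]
  constructor
  · intro hx
    by_contra hxP
    exact hG2 (G.mem_of_le hx (OrderHomClass.mono j (P.le_pmax hxP)))
  · intro hx
    exact hG1 (OrderHomClass.mono j (P.pmin_le hx))

/-- Prime filters can be lifted along extensions of their restriction (`p`-morphism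
property of the dual map, for a finite subalgebra). -/
theorem exists_le_comap_eq (j : HeytingHom A C) (G : PrimeF C) (P' : PrimeF A)
    (h : (comap j G).s ⊆ P'.s) :
    ∃ G' : PrimeF C, G.s ⊆ G'.s ∧ comap j G' = P' := by
  set F : Set C := {x : C | ∃ g ∈ G.s, g ⊓ j P'.pmin ≤ x} with hF
  have hGF : G.s ⊆ F := fun g hg => ⟨g, hg, inf_le_left⟩
  have hmemF : j P'.pmin ∈ F := ⟨⊤, G.top_mem, by simp⟩
  obtain ⟨G', hG1, hG2⟩ := dpi F ⟨j P'.pmin, hmemF⟩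
    (fun {x y} hx hxy => by
      obtain ⟨g, hg, hgx⟩ := hx; exact ⟨g, hg, le_trans hgx hxy⟩)
    (fun {x y} hx hy => by
      obtain ⟨g₁, hg₁, hgx⟩ := hx; obtain ⟨g₂, hg₂, hgy⟩ := hy
      exact ⟨g₁ ⊓ g₂, G.inf_mem hg₁ hg₂,
        le_inf (le_trans (inf_le_inf_right _ inf_le_left) hgx)
          (le_trans (inf_le_inf_right _ inf_le_right) hgy)⟩)
    (j P'.pmax)
    (fun x hx hxc => by
      obtain ⟨g, hg, hgx⟩ := hx
      have : g ≤ j P'.pmin ⇨ j P'.pmax := le_himp_iff.mpr (le_trans hgx hxc)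
      have hgm : j (P'.pmin ⇨ P'.pmax) ∈ G.s := G.mem_of_le hg (by rwa [map_himp])
      have : P'.pmin ⇨ P'.pmax ∈ P'.s := h hgm
      have : P'.pmax ∈ P'.s :=
        P'.mem_of_le (P'.inf_mem this P'.pmin_mem) (by simp [inf_comm])
      exact P'.pmax_nmem this)
  refine ⟨G', fun g hg => hG1 (hGF hg), ext' ?_⟩
  ext x
  simp only [mem_comap]
  constructor
  · intro hx
    by_contra hxP
    exact hG2 (G'.mem_of_le hx (OrderHomClass.mono j (P'.le_pmax hxP)))
  · intro hx
    exact G'.mem_of_le (hG1 hmemF) (OrderHomClass.mono j (P'.pmin_le hx))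

end Finite

end PrimeF
section Amalgam

variable {A B C : Type*} [HeytingAlgebra A] [HeytingAlgebra B] [HeytingAlgebra C]
variable (i : HeytingHom A B) (j : HeytingHom A C)

/-- Points of the amalgam: pairs of prime filters agreeing on `A`. -/
def AmPt : Type _ :=
  {p : PrimeF B × PrimeF C // PrimeF.comap i p.1 = PrimeF.comap j p.2}

/-- The order on points of the amalgam. -/
def AmLe (p q : AmPt i j) : Prop := p.1.1.s ⊆ q.1.1.s ∧ p.1.2.s ⊆ q.1.2.s

theorem amLe_refl (p : AmPt i j) : AmLe i j p p := ⟨subset_rfl, subset_rfl⟩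

theorem amLe_trans {p q r : AmPt i j} (h : AmLe i j p q) (h' : AmLe i j q r) :
    AmLe i j p r := ⟨h.1.trans h'.1, h.2.trans h'.2⟩

/-- The amalgam: up-sets of the poset of pairs of compatible prime filters. -/
def Am : Type _ :=
  {U : Set (AmPt i j) // ∀ ⦃p q : AmPt i j⦄, p ∈ U → AmLe i j p q → q ∈ U}

namespace Am

/-- Underlying set of a member of the amalgam. -/
def toSet (U : Am i j) : Set (AmPt i j) := U.1

theorem toSet_injective : Function.Injective (toSet i j) :=
  fun _ _ h => Subtype.ext h

instance : Min (Am i j) :=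
  ⟨fun U V => ⟨U.1 ∩ V.1, fun p q hp hpq => ⟨U.2 hp.1 hpq, V.2 hp.2 hpq⟩⟩⟩
instance : Max (Am i j) :=
  ⟨fun U V => ⟨U.1 ∪ V.1, fun p q hp hpq =>
    hp.elim (fun h => Or.inl (U.2 h hpq)) (fun h => Or.inr (V.2 h hpq))⟩⟩

instance : LE (Am i j) := ⟨fun U V => U.1 ⊆ V.1⟩
instance : LT (Am i j) := ⟨fun U V => U.1 ⊂ V.1⟩

instance : DistribLattice (Am i j) :=
  (toSet_injective i j).distribLattice _ Iff.rfl Iff.rfl (fun _ _ => rfl) (fun _ _ => rfl)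

theorem le_iff (U V : Am i j) : U ≤ V ↔ U.1 ⊆ V.1 := Iff.rfl

instance : BoundedOrder (Am i j) where
  top := ⟨Set.univ, fun _ _ _ _ => trivial⟩
  bot := ⟨∅, fun _ _ h _ => h.elim⟩
  le_top U := (le_iff i j _ _).mpr (Set.subset_univ _)
  bot_le U := (le_iff i j _ _).mpr (Set.empty_subset _)

instance : HeytingAlgebra (Am i j) :=
  HeytingAlgebra.ofHImp
    (fun U V => ⟨{p | ∀ q, AmLe i j p q → q ∈ U.1 → q ∈ V.1},
      fun p q hp hpq r hqr hr => hp r (amLe_trans i j hpq hqr) hr⟩)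
    (fun U V W =>
      ⟨fun h => (le_iff i j _ _).mpr fun p hp =>
          (le_iff i j _ _).mp h hp.1 p (amLe_refl i j p) hp.2,
       fun h => (le_iff i j _ _).mpr fun p hp q hpq hq =>
          (le_iff i j _ _).mp h ⟨U.2 hp hpq, hq⟩⟩)

theorem mem_himp_iff (U V : Am i j) (p : AmPt i j) :
    p ∈ (U ⇨ V).1 ↔ ∀ q, AmLe i j p q → q ∈ U.1 → q ∈ V.1 := Iff.rfl

theorem mem_top (p : AmPt i j) : p ∈ (⊤ : Am i j).1 := trivial

theorem mem_bot (p : AmPt i j) : p ∉ (⊥ : Am i j).1 := fun h => h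

theorem mem_inf_iff (U V : Am i j) (p : AmPt i j) :
    p ∈ (U ⊓ V).1 ↔ p ∈ U.1 ∧ p ∈ V.1 := Iff.rfl

theorem mem_sup_iff (U V : Am i j) (p : AmPt i j) :
    p ∈ (U ⊔ V).1 ↔ p ∈ U.1 ∨ p ∈ V.1 := Iff.rfl

theorem ext' {U V : Am i j} (h : U.1 = V.1) : U = V := Subtype.ext h

end Am

end Amalgam
namespace PrimeF

variable {B : Type*} [HeytingAlgebra B]

theorem exists_extension (F : PrimeF B) {b b' : B} (h : b ⇨ b' ∉ F.s) :
    ∃ F' : PrimeF B, F.s ⊆ F'.s ∧ b ∈ F'.s ∧ b' ∉ F'.s := by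
  obtain ⟨F', h1, h2⟩ := dpi {x : B | ∃ f ∈ F.s, f ⊓ b ≤ x}
    ⟨b, ⊤, F.top_mem, by simp⟩
    (fun {x y} hx hxy => by obtain ⟨f, hf, hfx⟩ := hx; exact ⟨f, hf, hfx.trans hxy⟩)
    (fun {x y} hx hy => by
      obtain ⟨f₁, hf₁, hfx⟩ := hx; obtain ⟨f₂, hf₂, hfy⟩ := hy
      exact ⟨f₁ ⊓ f₂, F.inf_mem hf₁ hf₂,
        le_inf ((inf_le_inf_right _ inf_le_left).trans hfx)
          ((inf_le_inf_right _ inf_le_right).trans hfy)⟩)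
    b'
    (fun x hx hxb => by
      obtain ⟨f, hf, hfx⟩ := hx
      exact h (F.mem_of_le hf (le_himp_iff.mpr (hfx.trans hxb))))
  exact ⟨F', fun f hf => h1 ⟨f, hf, inf_le_left⟩, h1 ⟨⊤, F.top_mem, by simp⟩, h2⟩

theorem exists_separating {b b' : B} (h : ¬b ≤ b') :
    ∃ F : PrimeF B, b ∈ F.s ∧ b' ∉ F.s := by
  obtain ⟨F, h1, h2⟩ := dpi {x : B | b ≤ x} ⟨b, le_refl _⟩
    (fun hx hxy => hx.trans hxy) (fun hx hy => le_inf hx hy) b'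
    (fun x hx hxb => h (hx.trans hxb))
  exact ⟨F, h1 (le_refl _), h2⟩

end PrimeF

section AmalgamEmb

variable {A B C : Type*} [HeytingAlgebra A] [HeytingAlgebra B] [HeytingAlgebra C] [Fintype A]
variable (i : HeytingHom A B) (j : HeytingHom A C)

namespace Am

/-- The canonical embedding of `B` into the amalgam. -/
def emb₁ : HeytingHom B (Am i j) where
  toFun b := ⟨{p | b ∈ p.1.1.s}, fun p q hp hpq => hpq.1 hp⟩
  map_sup' x y := ext' i j (by
    ext p
    simp only [Set.mem_setOf_eq, Set.mem_union]
    exact ⟨fun h => p.1.1.prime h,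
      fun h => h.elim (fun h' => p.1.1.mem_of_le h' le_sup_left)
        (fun h' => p.1.1.mem_of_le h' le_sup_right)⟩)
  map_inf' b b' := (ext' i j (Set.ext fun p =>
    ⟨fun h => ⟨p.1.1.mem_of_le h inf_le_left, p.1.1.mem_of_le h inf_le_right⟩,
     fun h => p.1.1.inf_mem h.1 h.2⟩))
  map_bot' := ext' i j (by
    ext p
    exact iff_of_false (fun h => p.1.1.bot_nmem h) (fun h => h))
  map_himp' b b' := ext' i j (Set.ext fun p => by
    constructor
    · intro hmem q hpq hb
      exact q.1.1.mem_of_le (q.1.1.inf_mem (hpq.1 hmem) hb) himp_inf_le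
    · intro hmem
      by_contra hno
      obtain ⟨F', hFF', hbF', hb'F'⟩ := p.1.1.exists_extension hno
      have hsub : (PrimeF.comap j p.1.2).s ⊆ (PrimeF.comap i F').s := by
        rw [← p.2]
        exact fun x hx => hFF' hx
      obtain ⟨G', hGG', hG'c⟩ := PrimeF.exists_le_comap_eq j p.1.2 (PrimeF.comap i F') hsub
      have hb'mem : b' ∈ F'.s := hmem ⟨(F', G'), hG'c.symm⟩ ⟨hFF', hGG'⟩ hbF'
      exact hb'F' hb'mem)

theorem mem_emb₁_iff (b : B) (p : AmPt i j) : p ∈ (emb₁ i j b).1 ↔ b ∈ p.1.1.s := Iff.rfl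

/-- The canonical embedding of `C` into the amalgam. -/
def emb₂ : HeytingHom C (Am i j) where
  toFun c := ⟨{p | c ∈ p.1.2.s}, fun p q hp hpq => hpq.2 hp⟩
  map_sup' x y := ext' i j (by
    ext p
    simp only [Set.mem_setOf_eq, Set.mem_union]
    exact ⟨fun h => p.1.2.prime h,
      fun h => h.elim (fun h' => p.1.2.mem_of_le h' le_sup_left)
        (fun h' => p.1.2.mem_of_le h' le_sup_right)⟩)
  map_inf' c c' := (ext' i j (Set.ext fun p =>
    ⟨fun h => ⟨p.1.2.mem_of_le h inf_le_left, p.1.2.mem_of_le h inf_le_right⟩,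
     fun h => p.1.2.inf_mem h.1 h.2⟩))
  map_bot' := ext' i j (by
    ext p
    exact iff_of_false (fun h => p.1.2.bot_nmem h) (fun h => h))
  map_himp' c c' := ext' i j (Set.ext fun p => by
    constructor
    · intro hmem q hpq hc
      exact q.1.2.mem_of_le (q.1.2.inf_mem (hpq.2 hmem) hc) himp_inf_le
    · intro hmem
      by_contra hno
      obtain ⟨G', hGG', hcG', hc'G'⟩ := p.1.2.exists_extension hno
      have hsub : (PrimeF.comap i p.1.1).s ⊆ (PrimeF.comap j G').s := by
        rw [p.2]
        exact fun x hx => hGG' hx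
      obtain ⟨F', hFF', hF'c⟩ := PrimeF.exists_le_comap_eq i p.1.1 (PrimeF.comap j G') hsub
      have : c' ∈ G'.s := hmem ⟨(F', G'), hF'c⟩ ⟨hFF', hGG'⟩ hcG'
      exact hc'G' this)

theorem mem_emb₂_iff (c : C) (p : AmPt i j) : p ∈ (emb₂ i j c).1 ↔ c ∈ p.1.2.s := Iff.rfl

theorem emb₁_injective (hj : Function.Injective j) : Function.Injective (emb₁ i j) := by
  have key : ∀ b b' : B, ¬b ≤ b' → emb₁ i j b ≠ emb₁ i j b' := by
    intro b b' hb heq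
    obtain ⟨F, hbF, hb'F⟩ := PrimeF.exists_separating hb
    obtain ⟨G, hG⟩ := PrimeF.exists_comap_eq j hj (PrimeF.comap i F)
    have hp : PrimeF.comap i F = PrimeF.comap j G := hG.symm
    have hmem : (⟨(F, G), hp⟩ : AmPt i j) ∈ (emb₁ i j b).1 := hbF
    rw [heq] at hmem
    exact hb'F hmem
  intro b b' heq
  by_contra hne
  by_cases h : b ≤ b'
  · exact key b' b (fun hh => hne (le_antisymm h hh)) heq.symm
  · exact key b b' h heq

theorem emb₂_injective (hi : Function.Injective i) : Function.Injective (emb₂ i j) := by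
  have key : ∀ c c' : C, ¬c ≤ c' → emb₂ i j c ≠ emb₂ i j c' := by
    intro c c' hc heq
    obtain ⟨G, hcG, hc'G⟩ := PrimeF.exists_separating hc
    obtain ⟨F, hF⟩ := PrimeF.exists_comap_eq i hi (PrimeF.comap j G)
    have hmem : (⟨(F, G), hF⟩ : AmPt i j) ∈ (emb₂ i j c).1 := hcG
    rw [heq] at hmem
    exact hc'G hmem
  intro c c' heq
  by_contra hne
  by_cases h : c ≤ c'
  · exact key c' c (fun hh => hne (le_antisymm h hh)) heq.symm
  · exact key c c' h heq

theorem emb_compat (a : A) : emb₁ i j (i a) = emb₂ i j (j a) := by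
  apply ext'
  ext p
  rw [mem_emb₁_iff, mem_emb₂_iff]
  constructor
  · intro h
    have : a ∈ (PrimeF.comap i p.1.1).s := h
    rw [p.2] at this
    exact this
  · intro h
    have : a ∈ (PrimeF.comap j p.1.2).s := h
    rw [← p.2] at this
    exact this

end Am

end AmalgamEmb
section Countable

variable {K : Type*} [HeytingAlgebra K]

theorem exists_countable_subalgebra (s : Set K) (hs : s.Countable) :
    ∃ S : HeytingSubalgebra K, S.carrier.Countable ∧ s ⊆ S.carrier := by
  let step : Set K → Set K := fun t =>
    t ∪ Set.image2 (· ⊓ ·) t t ∪ Set.image2 (· ⊔ ·) t t ∪ Set.image2 (· ⇨ ·) t t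
  let T : ℕ → Set K := fun n => Nat.rec (s ∪ {⊥, ⊤}) (fun _ t => step t) n
  have hstep : ∀ n, T (n + 1) = step (T n) := fun n => rfl
  have hsub : ∀ n, T n ⊆ T (n + 1) := fun n x hx => by
    rw [hstep]
    exact Or.inl (Or.inl (Or.inl hx))
  have hmono : ∀ {m n : ℕ}, m ≤ n → T m ⊆ T n := by
    intro m n h
    induction h with
    | refl => exact subset_rfl
    | step _ ih => exact ih.trans (hsub _)
  have hcount : ∀ n, (T n).Countable := by
    intro n
    induction n with
    | zero =>
      exact hs.union (((Set.finite_singleton (⊤ : K)).insert ⊥).countable)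
    | succ n ih =>
      rw [hstep]
      exact ((ih.union (ih.image2 ih _)).union (ih.image2 ih _)).union (ih.image2 ih _)
  have hmem2 : ∀ (op : K → K → K) (ho : ∀ t, Set.image2 op t t ⊆ step t)
      {x y : K}, x ∈ ⋃ n, T n → y ∈ ⋃ n, T n → op x y ∈ ⋃ n, T n := by
    intro op ho x y hx hy
    obtain ⟨_, ⟨m, rfl⟩, hxm⟩ := hx
    obtain ⟨_, ⟨n, rfl⟩, hyn⟩ := hy
    refine Set.mem_iUnion.mpr ⟨max m n + 1, ?_⟩
    rw [hstep]
    exact ho _ (Set.mem_image2_of_mem (hmono (le_max_left m n) hxm)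
      (hmono (le_max_right m n) hyn))
  refine ⟨⟨⋃ n, T n, ?_, ?_, ?_, ?_, ?_⟩, Set.countable_iUnion hcount, ?_⟩
  · exact Set.mem_iUnion.mpr ⟨0, Or.inr (Set.mem_insert _ _)⟩
  · exact Set.mem_iUnion.mpr ⟨0, Or.inr (Set.mem_insert_of_mem _ rfl)⟩
  · exact fun hx hy => hmem2 _ (fun t => fun z hz => Or.inl (Or.inl (Or.inr hz))) hx hy
  · exact fun hx hy => hmem2 _ (fun t => fun z hz => Or.inl (Or.inr hz)) hx hy
  · exact fun hx hy => hmem2 _ (fun t => fun z hz => Or.inr hz) hx hy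
  · exact fun x hx => Set.mem_iUnion.mpr ⟨0, Or.inl hx⟩

/-- Universe-adjusting wrapper. -/
structure SmallWrap (R : Set ℕ) : Type w where
  val : R

/-- Any countable Heyting algebra has an isomorphic copy in any universe. -/
theorem exists_small_copy (K : Type*) [HeytingAlgebra K] [Countable K] :
    ∃ (K' : Type w) (_ : HeytingAlgebra K') (g : HeytingHom K K'), Function.Bijective g := by
  obtain ⟨f, hf⟩ := exists_injective_nat K
  let R : Set ℕ := Set.range f
  let e : K ≃ R := Equiv.ofInjective f hf
  let L : Type w := SmallWrap.{w} R
  let q : L ≃ K :=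
    { toFun := fun x => e.symm x.val
      invFun := fun k => ⟨e k⟩
      left_inv := fun x => by cases x; simp
      right_inv := fun k => by simp }
  letI : Max L := ⟨fun x y => q.symm (q x ⊔ q y)⟩
  letI : Min L := ⟨fun x y => q.symm (q x ⊓ q y)⟩
  letI : Top L := ⟨q.symm ⊤⟩
  letI : Bot L := ⟨q.symm ⊥⟩
  letI : HImp L := ⟨fun x y => q.symm (q x ⇨ q y)⟩
  letI : Compl L := ⟨fun x => q.symm ((q x)ᶜ)⟩
  letI : LE L := ⟨fun x y => q x ≤ q y⟩
  letI : LT L := ⟨fun x y => q x < q y⟩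
  letI : HeytingAlgebra L := q.injective.heytingAlgebra q Iff.rfl Iff.rfl
    (fun a b => q.apply_symm_apply _) (fun a b => q.apply_symm_apply _)
    (q.apply_symm_apply _) (q.apply_symm_apply _)
    (fun a => q.apply_symm_apply _) (fun a b => q.apply_symm_apply _)
  refine ⟨L, inferInstance, ?_, ?_⟩
  · exact
      { toFun := q.symm
        map_sup' := fun a b => by
          show q.symm (a ⊔ b) = q.symm (q (q.symm a) ⊔ q (q.symm b))
          rw [q.apply_symm_apply, q.apply_symm_apply]
        map_inf' := fun a b => by
          show q.symm (a ⊓ b) = q.symm (q (q.symm a) ⊓ q (q.symm b))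
          rw [q.apply_symm_apply, q.apply_symm_apply]
        map_bot' := rfl
        map_himp' := fun a b => by
          show q.symm (a ⇨ b) = q.symm (q (q.symm a) ⇨ q (q.symm b))
          rw [q.apply_symm_apply, q.apply_symm_apply] }
  · exact q.symm.bijective

end Countable
section System

variable {l m : ℕ} {A C : Type*}

/-- The list of equations describing the multiplication table of `C` with parameters
indexed by `A`. -/
def sysEqs [HeytingAlgebra C] (j : A → C) (eA : Fin l → A) (eC : C ≃ Fin m) :
    List (HeytingTerm (l + m)) :=
  (((List.finRange m ×ˢ List.finRange m).map fun kk =>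
    HeytingTerm.biimp (.var (Fin.natAdd l (eC (eC.symm kk.1 ⊓ eC.symm kk.2))))
      (.inf (.var (Fin.natAdd l kk.1)) (.var (Fin.natAdd l kk.2)))) ++
  ((List.finRange m ×ˢ List.finRange m).map fun kk =>
    HeytingTerm.biimp (.var (Fin.natAdd l (eC (eC.symm kk.1 ⊔ eC.symm kk.2))))
      (.sup (.var (Fin.natAdd l kk.1)) (.var (Fin.natAdd l kk.2)))) ++
  ((List.finRange m ×ˢ List.finRange m).map fun kk =>
    HeytingTerm.biimp (.var (Fin.natAdd l (eC (eC.symm kk.1 ⇨ eC.symm kk.2))))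
      (.himp (.var (Fin.natAdd l kk.1)) (.var (Fin.natAdd l kk.2)))) ++
  [HeytingTerm.biimp (.var (Fin.natAdd l (eC ⊥))) .bot,
   HeytingTerm.biimp (.var (Fin.natAdd l (eC ⊤))) .top] ++
  (List.finRange l).map fun idx =>
    HeytingTerm.biimp (.var (Fin.castAdd m idx)) (.var (Fin.natAdd l (eC (j (eA idx))))))

theorem sysEqs_eval_iff [HeytingAlgebra C] (j : A → C) (eA : Fin l → A) (eC : C ≃ Fin m)
    {Z : Type*} [HeytingAlgebra Z] (a : Fin l → Z) (b : Fin m → Z) :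
    (∀ u ∈ sysEqs j eA eC, u.eval (Fin.append a b) = ⊤) ↔
      ((∀ x y : C, b (eC (x ⊓ y)) = b (eC x) ⊓ b (eC y)) ∧
       (∀ x y : C, b (eC (x ⊔ y)) = b (eC x) ⊔ b (eC y)) ∧
       (∀ x y : C, b (eC (x ⇨ y)) = b (eC x) ⇨ b (eC y)) ∧
       b (eC ⊥) = ⊥ ∧ b (eC ⊤) = ⊤ ∧
       ∀ idx : Fin l, a idx = b (eC (j (eA idx)))) := by
  constructor
  · intro h
    refine ⟨?_, ?_, ?_, ?_, ?_, ?_⟩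
    · intro x y
      have := h _ (by
        apply List.mem_append_left; apply List.mem_append_left
        apply List.mem_append_left; apply List.mem_append_left
        exact List.mem_map.mpr ⟨(eC x, eC y), List.pair_mem_product.mpr
          ⟨List.mem_finRange _, List.mem_finRange _⟩, rfl⟩)
      rw [HeytingTerm.biimp_eval_eq_top] at this
      simpa [HeytingTerm.eval, Fin.append_right] using this
    · intro x y
      have := h _ (by
        apply List.mem_append_left; apply List.mem_append_left
        apply List.mem_append_left; apply List.mem_append_right
        exact List.mem_map.mpr ⟨(eC x, eC y), List.pair_mem_product.mpr
          ⟨List.mem_finRange _, List.mem_finRange _⟩, rfl⟩)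
      rw [HeytingTerm.biimp_eval_eq_top] at this
      simpa [HeytingTerm.eval, Fin.append_right] using this
    · intro x y
      have := h _ (by
        apply List.mem_append_left; apply List.mem_append_left
        apply List.mem_append_right
        exact List.mem_map.mpr ⟨(eC x, eC y), List.pair_mem_product.mpr
          ⟨List.mem_finRange _, List.mem_finRange _⟩, rfl⟩)
      rw [HeytingTerm.biimp_eval_eq_top] at this
      simpa [HeytingTerm.eval, Fin.append_right] using this
    · have := h _ (by
        apply List.mem_append_left; apply List.mem_append_right
        exact List.mem_cons_self)
      rw [HeytingTerm.biimp_eval_eq_top] at this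
      simpa [HeytingTerm.eval, Fin.append_right] using this
    · have := h _ (by
        apply List.mem_append_left; apply List.mem_append_right
        exact List.mem_cons_of_mem _ List.mem_cons_self)
      rw [HeytingTerm.biimp_eval_eq_top] at this
      simpa [HeytingTerm.eval, Fin.append_right] using this
    · intro idx
      have := h _ (by
        apply List.mem_append_right
        exact List.mem_map.mpr ⟨idx, List.mem_finRange _, rfl⟩)
      rw [HeytingTerm.biimp_eval_eq_top] at this
      simpa [HeytingTerm.eval, Fin.append_left, Fin.append_right] using this
  · rintro ⟨hinf, hsup, himp', hbot, htop, hpar⟩ u hu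
    rw [sysEqs] at hu
    rcases List.mem_append.mp hu with hu | hu
    rotate_left
    · obtain ⟨idx, _, rfl⟩ := List.mem_map.mp hu
      rw [HeytingTerm.biimp_eval_eq_top]
      simp [HeytingTerm.eval, Fin.append_left, Fin.append_right, hpar idx]
    rcases List.mem_append.mp hu with hu | hu
    rotate_left
    · simp only [List.mem_cons, List.not_mem_nil, or_false] at hu
      rcases hu with rfl | rfl
      · rw [HeytingTerm.biimp_eval_eq_top]
        simp [HeytingTerm.eval, Fin.append_right, hbot]
      · rw [HeytingTerm.biimp_eval_eq_top]
        simp [HeytingTerm.eval, Fin.append_right, htop]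
    rcases List.mem_append.mp hu with hu | hu
    rotate_left
    · obtain ⟨kk, _, rfl⟩ := List.mem_map.mp hu
      rw [HeytingTerm.biimp_eval_eq_top]
      have := himp' (eC.symm kk.1) (eC.symm kk.2)
      simp only [Equiv.apply_symm_apply] at this
      simp [HeytingTerm.eval, Fin.append_right, this]
    rcases List.mem_append.mp hu with hu | hu
    · obtain ⟨kk, _, rfl⟩ := List.mem_map.mp hu
      rw [HeytingTerm.biimp_eval_eq_top]
      have := hinf (eC.symm kk.1) (eC.symm kk.2)
      simp only [Equiv.apply_symm_apply] at this
      simp [HeytingTerm.eval, Fin.append_right, this]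
    · obtain ⟨kk, _, rfl⟩ := List.mem_map.mp hu
      rw [HeytingTerm.biimp_eval_eq_top]
      have := hsup (eC.symm kk.1) (eC.symm kk.2)
      simp only [Equiv.apply_symm_apply] at this
      simp [HeytingTerm.eval, Fin.append_right, this]

/-- Inequations stating that the unknowns are pairwise distinct. -/
def sysS (l m : ℕ) (k : Fin (m * m)) : HeytingTerm (l + m) :=
  if (finProdFinEquiv.symm k).1 = (finProdFinEquiv.symm k).2 then .bot
  else HeytingTerm.biimp (.var (Fin.natAdd l (finProdFinEquiv.symm k).1))
    (.var (Fin.natAdd l (finProdFinEquiv.symm k).2))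

theorem sysS_spec {Z : Type*} [HeytingAlgebra Z] (hZ : (⊥ : Z) ≠ ⊤)
    (a : Fin l → Z) (b : Fin m → Z) :
    (∀ k : Fin (m * m), (sysS l m k).eval (Fin.append a b) ≠ ⊤) ↔
      ∀ k₁ k₂ : Fin m, k₁ ≠ k₂ → b k₁ ≠ b k₂ := by
  constructor
  · intro h k₁ k₂ hne heq
    have hk := h (finProdFinEquiv (k₁, k₂))
    rw [sysS] at hk
    simp only [Equiv.symm_apply_apply] at hk
    rw [if_neg hne] at hk
    exact hk (HeytingTerm.biimp_eval_eq_top.mpr (by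
      simp [HeytingTerm.eval, Fin.append_right, heq]))
  · intro h k
    rw [sysS]
    by_cases hkk : (finProdFinEquiv.symm k).1 = (finProdFinEquiv.symm k).2
    · rw [if_pos hkk]
      simpa [HeytingTerm.eval] using hZ
    · rw [if_neg hkk]
      intro hcon
      rw [HeytingTerm.biimp_eval_eq_top] at hcon
      simp only [HeytingTerm.eval, Fin.append_right] at hcon
      exact h _ _ hkk hcon

end System
theorem IsExtClosed.solve {H : Type*} [HeytingAlgebra H] [Countable H] (hec : IsExtClosed H)
    {K : Type*} [HeytingAlgebra K] (f : HeytingHom H K) (hf : Function.Injective f)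
    {l m κ : ℕ} (t : HeytingTerm (l + m)) (s : Fin κ → HeytingTerm (l + m)) (a : Fin l → H)
    (hsol : HasSolution t s (fun i => f (a i))) : HasSolution t s a := by
  obtain ⟨b, hb⟩ := hsol
  obtain ⟨S, hSc, hSs⟩ := exists_countable_subalgebra (Set.range f ∪ Set.range b)
    ((Set.countable_range f).union (Set.countable_range b))
  haveI : Countable S.carrier := hSc.to_subtype
  let f₀ : HeytingHom H S.carrier := S.codRestrict f (fun x => hSs (Or.inl ⟨x, rfl⟩))
  let b₀ : Fin m → S.carrier := fun k => ⟨b k, hSs (Or.inr ⟨k, rfl⟩)⟩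
  have hb₀ : IsSolution t s (fun i => f₀ (a i)) b₀ := by
    apply (IsSolution.map_iff S.incl S.incl_injective).mp
    exact hb
  obtain ⟨K', _, g, hg⟩ := exists_small_copy S.carrier
  have hb₁ : IsSolution t s (fun i => (g.comp f₀) (a i)) (fun k => g (b₀ k)) :=
    (IsSolution.map_iff g hg.injective).mpr hb₀
  have hf₀ : Function.Injective f₀ := by
    intro x y hxy
    apply hf
    have := congrArg S.incl hxy
    exact this
  exact hec K' (g.comp f₀) (hg.injective.comp hf₀) t s a ⟨_, hb₁⟩

/-- A partial embedding between Heyting algebras, defined on a subalgebra. -/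
structure PEmb (X X' : Type*) [HeytingAlgebra X] [HeytingAlgebra X'] where
  dom : HeytingSubalgebra X
  fin : dom.carrier.Finite
  f : X → X'
  inj : Set.InjOn f dom.carrier
  map_bot : f ⊥ = ⊥
  map_top : f ⊤ = ⊤
  map_inf : ∀ {x y : X}, x ∈ dom.carrier → y ∈ dom.carrier → f (x ⊓ y) = f x ⊓ f y
  map_sup : ∀ {x y : X}, x ∈ dom.carrier → y ∈ dom.carrier → f (x ⊔ y) = f x ⊔ f y
  map_himp : ∀ {x y : X}, x ∈ dom.carrier → y ∈ dom.carrier → f (x ⇨ y) = f x ⇨ f y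

namespace PEmb

variable {X X' : Type*} [HeytingAlgebra X] [HeytingAlgebra X'] (φ : PEmb X X')

/-- The image subalgebra of a partial embedding. -/
def codom : HeytingSubalgebra X' where
  carrier := φ.f '' φ.dom.carrier
  bot_mem := ⟨⊥, φ.dom.bot_mem, φ.map_bot⟩
  top_mem := ⟨⊤, φ.dom.top_mem, φ.map_top⟩
  inf_mem := by
    rintro _ _ ⟨x, hx, rfl⟩ ⟨y, hy, rfl⟩
    exact ⟨x ⊓ y, φ.dom.inf_mem hx hy, φ.map_inf hx hy⟩
  sup_mem := by
    rintro _ _ ⟨x, hx, rfl⟩ ⟨y, hy, rfl⟩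
    exact ⟨x ⊔ y, φ.dom.sup_mem hx hy, φ.map_sup hx hy⟩
  himp_mem := by
    rintro _ _ ⟨x, hx, rfl⟩ ⟨y, hy, rfl⟩
    exact ⟨x ⇨ y, φ.dom.himp_mem hx hy, φ.map_himp hx hy⟩

theorem codom_fin : φ.codom.carrier.Finite := φ.fin.image _

/-- The inverse partial embedding. -/
noncomputable def flip : PEmb X' X where
  dom := φ.codom
  fin := φ.codom_fin
  f := Function.invFunOn φ.f φ.dom.carrier
  inj := by
    rintro _ ⟨x, hx, rfl⟩ _ ⟨y, hy, rfl⟩ h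
    rw [φ.inj.leftInvOn_invFunOn hx, φ.inj.leftInvOn_invFunOn hy] at h
    rw [h]
  map_bot := by
    rw [← φ.map_bot, φ.inj.leftInvOn_invFunOn φ.dom.bot_mem]
  map_top := by
    rw [← φ.map_top, φ.inj.leftInvOn_invFunOn φ.dom.top_mem]
  map_inf := by
    rintro _ _ ⟨x, hx, rfl⟩ ⟨y, hy, rfl⟩
    rw [← φ.map_inf hx hy, φ.inj.leftInvOn_invFunOn hx, φ.inj.leftInvOn_invFunOn hy,
      φ.inj.leftInvOn_invFunOn (φ.dom.inf_mem hx hy)]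
  map_sup := by
    rintro _ _ ⟨x, hx, rfl⟩ ⟨y, hy, rfl⟩
    rw [← φ.map_sup hx hy, φ.inj.leftInvOn_invFunOn hx, φ.inj.leftInvOn_invFunOn hy,
      φ.inj.leftInvOn_invFunOn (φ.dom.sup_mem hx hy)]
  map_himp := by
    rintro _ _ ⟨x, hx, rfl⟩ ⟨y, hy, rfl⟩
    rw [← φ.map_himp hx hy, φ.inj.leftInvOn_invFunOn hx, φ.inj.leftInvOn_invFunOn hy,
      φ.inj.leftInvOn_invFunOn (φ.dom.himp_mem hx hy)]

theorem flip_dom : φ.flip.dom = φ.codom := rfl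

theorem flip_f_apply {x : X} (hx : x ∈ φ.dom.carrier) : φ.flip.f (φ.f x) = x :=
  φ.inj.leftInvOn_invFunOn hx

theorem f_flip_apply {y : X'} (hy : y ∈ φ.codom.carrier) : φ.f (φ.flip.f y) = y := by
  obtain ⟨x, hx, rfl⟩ := hy
  rw [φ.flip_f_apply hx]

end PEmb
theorem PEmb.extend {X X' : Type*} [HeytingAlgebra X] [HeytingAlgebra X'] [Countable X']
    (hec : IsExtClosed X') (hnt : (⊥ : X') ≠ ⊤)
    (φ : PEmb X X') (D : HeytingSubalgebra X) (hD : D.carrier.Finite)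
    (hsub : φ.dom.carrier ⊆ D.carrier) :
    ∃ ψ : PEmb X X', ψ.dom = D ∧ ∀ x ∈ φ.dom.carrier, ψ.f x = φ.f x := by
  classical
  haveI : Fintype φ.dom.carrier := φ.fin.fintype
  haveI : Fintype D.carrier := hD.fintype
  let i : HeytingHom φ.dom.carrier X' :=
    { toFun := fun x => φ.f x.1
      map_sup' := fun x y => φ.map_sup x.2 y.2
      map_inf' := fun x y => φ.map_inf x.2 y.2
      map_bot' := φ.map_bot
      map_himp' := fun x y => φ.map_himp x.2 y.2 }
  let j : HeytingHom φ.dom.carrier D.carrier :=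
    { toFun := fun x => ⟨x.1, hsub x.2⟩
      map_sup' := fun x y => rfl
      map_inf' := fun x y => rfl
      map_bot' := rfl
      map_himp' := fun x y => rfl }
  have hi : Function.Injective i := fun x y h => Subtype.ext (φ.inj x.2 y.2 h)
  have hj : Function.Injective j := by
    intro x y h
    have hval : (j x).1 = (j y).1 := congrArg Subtype.val h
    exact Subtype.ext hval
  set l := Fintype.card φ.dom.carrier with hl
  set m := Fintype.card D.carrier with hm
  let eA : φ.dom.carrier ≃ Fin l := Fintype.equivFin _
  let eC : D.carrier ≃ Fin m := Fintype.equivFin _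
  let a : Fin l → X' := fun idx => i (eA.symm idx)
  let β := Am.emb₁ i j
  let γ := Am.emb₂ i j
  have hβ : Function.Injective β := Am.emb₁_injective i j hj
  have hγ : Function.Injective γ := Am.emb₂_injective i j hi
  have hKnt : (⊥ : Am i j) ≠ ⊤ := by
    intro h
    have hb : β ⊥ = β ⊤ := by rw [BotHomClass.map_bot, TopHomClass.map_top]; exact h
    exact hnt (hβ hb)
  have hsolK : HasSolution (HeytingTerm.conjList (sysEqs j eA.symm eC)) (sysS l m)
      (fun idx => β (a idx)) := by
    refine ⟨fun k => γ (eC.symm k), ?_, ?_⟩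
    · rw [HeytingTerm.conjList_eval_eq_top, sysEqs_eval_iff]
      refine ⟨?_, ?_, ?_, ?_, ?_, ?_⟩
      · intro x y
        simp only [Equiv.symm_apply_apply]
        exact InfHomClass.map_inf γ x y
      · intro x y
        simp only [Equiv.symm_apply_apply]
        exact SupHomClass.map_sup γ x y
      · intro x y
        simp only [Equiv.symm_apply_apply]
        exact HeytingHomClass.map_himp γ x y
      · simp only [Equiv.symm_apply_apply]
        exact BotHomClass.map_bot γ
      · simp only [Equiv.symm_apply_apply]
        exact TopHomClass.map_top γ
      · intro idx
        simp only [Equiv.symm_apply_apply]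
        exact Am.emb_compat i j (eA.symm idx)
    · rw [sysS_spec hKnt]
      intro k₁ k₂ hne heq
      exact hne (eC.symm.injective (hγ heq))
  obtain ⟨bb, hbb1, hbb2⟩ := hec.solve β hβ _ (sysS l m) a hsolK
  rw [HeytingTerm.conjList_eval_eq_top, sysEqs_eval_iff] at hbb1
  obtain ⟨hinf, hsup, himp', hbot, htop, hpar⟩ := hbb1
  rw [sysS_spec hnt] at hbb2
  have hbbinj : ∀ {u v : D.carrier}, bb (eC u) = bb (eC v) → u = v := by
    intro u v h
    by_contra hne
    exact hbb2 _ _ (fun hh => hne (eC.injective hh)) h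
  refine ⟨⟨D, hD, fun x => if h : x ∈ D.carrier then bb (eC ⟨x, h⟩) else ⊥,
    ?_, ?_, ?_, ?_, ?_, ?_⟩, rfl, ?_⟩
  · intro x hx y hy h
    simp only [dif_pos hx, dif_pos hy] at h
    have := hbbinj h
    exact congrArg Subtype.val this
  · simp only [dif_pos D.bot_mem]
    exact hbot
  · simp only [dif_pos D.top_mem]
    exact htop
  · intro x y hx hy
    simp only [dif_pos hx, dif_pos hy, dif_pos (D.inf_mem hx hy)]
    exact hinf ⟨x, hx⟩ ⟨y, hy⟩
  · intro x y hx hy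
    simp only [dif_pos hx, dif_pos hy, dif_pos (D.sup_mem hx hy)]
    exact hsup ⟨x, hx⟩ ⟨y, hy⟩
  · intro x y hx hy
    simp only [dif_pos hx, dif_pos hy, dif_pos (D.himp_mem hx hy)]
    exact himp' ⟨x, hx⟩ ⟨y, hy⟩
  · intro x hx
    simp only [dif_pos (hsub hx)]
    have h2 : i (eA.symm (eA ⟨x, hx⟩)) = bb (eC (j (eA.symm (eA ⟨x, hx⟩)))) :=
      hpar (eA ⟨x, hx⟩)
    rw [Equiv.symm_apply_apply] at h2
    exact h2.symm
/-- The trivial partial embedding defined on `{⊥, ⊤}`. -/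
noncomputable def PEmb.base (H₁ H₂ : Type*) [HeytingAlgebra H₁] [HeytingAlgebra H₂]
    (h₁ : (⊥ : H₁) ≠ ⊤) (h₂ : (⊥ : H₂) ≠ ⊤) : PEmb H₁ H₂ := by
  classical
  refine
    { dom := ⟨{⊥, ⊤}, Or.inl rfl, Or.inr rfl, ?_, ?_, ?_⟩
      fin := (Set.finite_singleton (⊤ : H₁)).insert ⊥
      f := fun x => if x = ⊤ then ⊤ else ⊥
      inj := ?_
      map_bot := by simp [h₁]
      map_top := by simp
      map_inf := ?_
      map_sup := ?_
      map_himp := ?_ }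
  · rintro x y (rfl | rfl) (rfl | rfl) <;> simp
  · rintro x y (rfl | rfl) (rfl | rfl) <;> simp
  · rintro x y (rfl | rfl) (rfl | rfl) <;> simp [h₁]
  · rintro x (rfl | rfl) y (rfl | rfl) h <;> simp [h₁] at h ⊢ <;> first | rfl | exact absurd h.symm h₂ | exact absurd h h₂
  · rintro x y (rfl | rfl) (rfl | rfl) <;> simp [h₁]
  · rintro x y (rfl | rfl) (rfl | rfl) <;> simp [h₁]
  · rintro x y (rfl | rfl) (rfl | rfl) <;> simp [h₁]
/-- Any two nontrivial countable locally finite existentially closed Heyting algebras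
are isomorphic. -/
theorem nontrivial_countable_locallyFinite_extClosed_unique
    (H₁ H₂ : Type*) [HeytingAlgebra H₁] [HeytingAlgebra H₂] [Countable H₁] [Countable H₂]
    (h₁ : (⊥ : H₁) ≠ ⊤) (hlf₁ : LocallyFiniteHA H₁) (hec₁ : IsExtClosed H₁)
    (h₂ : (⊥ : H₂) ≠ ⊤) (hlf₂ : LocallyFiniteHA H₂) (hec₂ : IsExtClosed H₂) :
    ∃ f : HeytingHom H₁ H₂, Function.Bijective f := by
  classical
  -- one back-and-forth step
  have step : ∀ (P : PEmb H₁ H₂) (x : H₁) (y : H₂), ∃ Q : PEmb H₁ H₂,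
      (∀ z ∈ P.dom.carrier, z ∈ Q.dom.carrier ∧ Q.f z = P.f z) ∧
      x ∈ Q.dom.carrier ∧ y ∈ Q.f '' Q.dom.carrier := by
    intro P x y
    obtain ⟨D₁, hD₁fin, hD₁sub⟩ := hlf₁ (insert x P.fin.toFinset)
    have hsub1 : P.dom.carrier ⊆ D₁.carrier := fun z hz => hD₁sub (by
      simp only [Finset.coe_insert, Set.mem_insert_iff, Finset.mem_coe,
        Set.Finite.mem_toFinset]
      exact Or.inr hz)
    obtain ⟨Q₁, hQ₁dom, hQ₁ext⟩ := PEmb.extend hec₂ h₂ P D₁ hD₁fin hsub1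
    have hxQ₁ : x ∈ Q₁.dom.carrier := by
      rw [hQ₁dom]
      exact hD₁sub (by simp)
    obtain ⟨D₂, hD₂fin, hD₂sub⟩ := hlf₂ (insert y Q₁.codom_fin.toFinset)
    have hsub2 : Q₁.flip.dom.carrier ⊆ D₂.carrier := fun z hz => hD₂sub (by
      simp only [Finset.coe_insert, Set.mem_insert_iff, Finset.mem_coe,
        Set.Finite.mem_toFinset]
      exact Or.inr hz)
    obtain ⟨R, hRdom, hRext⟩ := PEmb.extend hec₁ h₁ Q₁.flip D₂ hD₂fin hsub2
    have hkey : ∀ z ∈ Q₁.dom.carrier, z ∈ R.codom.carrier ∧ R.flip.f z = Q₁.f z := by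
      intro z hz
      have hfz : Q₁.f z ∈ Q₁.flip.dom.carrier := ⟨z, hz, rfl⟩
      have hfzR : Q₁.f z ∈ R.dom.carrier := by rw [hRdom]; exact hsub2 hfz
      have hRf : R.f (Q₁.f z) = z := by
        rw [hRext _ hfz]
        exact Q₁.flip_f_apply hz
      constructor
      · exact ⟨Q₁.f z, hfzR, hRf⟩
      · have : R.flip.f (R.f (Q₁.f z)) = Q₁.f z := R.flip_f_apply hfzR
        rw [hRf] at this
        exact this
    refine ⟨R.flip, ?_, ?_, ?_⟩
    · intro z hz
      have hzQ₁ : z ∈ Q₁.dom.carrier := by rw [hQ₁dom]; exact hsub1 hz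
      obtain ⟨hm, hv⟩ := hkey z hzQ₁
      exact ⟨hm, by rw [hv, hQ₁ext z hz]⟩
    · exact (hkey x hxQ₁).1
    · have hyD₂ : y ∈ R.dom.carrier := by
        rw [hRdom]
        exact hD₂sub (by simp)
      exact ⟨R.f y, ⟨y, hyD₂, rfl⟩, R.flip_f_apply hyD₂⟩
  -- enumerations
  haveI : Nonempty H₁ := ⟨⊥⟩
  haveI : Nonempty H₂ := ⟨⊥⟩
  obtain ⟨e₁, he₁⟩ := exists_surjective_nat H₁
  obtain ⟨e₂, he₂⟩ := exists_surjective_nat H₂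
  -- the chain of partial embeddings
  let P : ℕ → PEmb H₁ H₂ := fun n =>
    Nat.rec (PEmb.base H₁ H₂ h₁ h₂)
      (fun n Pn => Classical.choose (step Pn (e₁ n) (e₂ n))) n
  have hP : ∀ n, (∀ z ∈ (P n).dom.carrier,
        z ∈ (P (n+1)).dom.carrier ∧ (P (n+1)).f z = (P n).f z) ∧
      e₁ n ∈ (P (n+1)).dom.carrier ∧
      e₂ n ∈ (P (n+1)).f '' (P (n+1)).dom.carrier :=
    fun n => Classical.choose_spec (step (P n) (e₁ n) (e₂ n))
  have hchain : ∀ n k, ∀ z ∈ (P n).dom.carrier,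
      z ∈ (P (n+k)).dom.carrier ∧ (P (n+k)).f z = (P n).f z := by
    intro n k
    induction k with
    | zero => exact fun z hz => ⟨hz, rfl⟩
    | succ k ih =>
      intro z hz
      obtain ⟨ih1, ih2⟩ := ih z hz
      obtain ⟨h3, h4⟩ := (hP (n+k)).1 z ih1
      exact ⟨h3, h4.trans ih2⟩
  have hagree : ∀ {na nb : ℕ} {z : H₁}, z ∈ (P na).dom.carrier →
      z ∈ (P nb).dom.carrier → (P na).f z = (P nb).f z := by
    intro na nb z ha hb
    rcases le_total na nb with h | h
    · obtain ⟨k, rfl⟩ := Nat.exists_eq_add_of_le h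
      exact ((hchain na k z ha).2).symm
    · obtain ⟨k, rfl⟩ := Nat.exists_eq_add_of_le h
      exact (hchain nb k z hb).2
  have hdommono : ∀ {na nb : ℕ}, na ≤ nb →
      (P na).dom.carrier ⊆ (P nb).dom.carrier := by
    intro na nb h z hz
    obtain ⟨k, rfl⟩ := Nat.exists_eq_add_of_le h
    exact (hchain na k z hz).1
  have hex : ∀ x : H₁, ∃ n, x ∈ (P n).dom.carrier := by
    intro x
    obtain ⟨n, rfl⟩ := he₁ x
    exact ⟨n + 1, (hP n).2.1⟩
  let N : H₁ → ℕ := fun x => Classical.choose (hex x)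
  have hN : ∀ x, x ∈ (P (N x)).dom.carrier := fun x => Classical.choose_spec (hex x)
  let F : H₁ → H₂ := fun x => (P (N x)).f x
  have hF : ∀ {n : ℕ} {x : H₁}, x ∈ (P n).dom.carrier → F x = (P n).f x :=
    fun {n x} hxn => hagree (hN x) hxn
  have hmem2 : ∀ (x y : H₁), ∃ n, x ∈ (P n).dom.carrier ∧ y ∈ (P n).dom.carrier := by
    intro x y
    exact ⟨max (N x) (N y), hdommono (le_max_left _ _) (hN x),
      hdommono (le_max_right _ _) (hN y)⟩
  refine ⟨{ toFun := F
            map_sup' := ?_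
            map_inf' := ?_
            map_bot' := ?_
            map_himp' := ?_ }, ?_, ?_⟩
  · intro x y
    show F (x ⊔ y) = F x ⊔ F y
    obtain ⟨n, hx, hy⟩ := hmem2 x y
    rw [hF hx, hF hy, hF ((P n).dom.sup_mem hx hy), (P n).map_sup hx hy]
  · intro x y
    show F (x ⊓ y) = F x ⊓ F y
    obtain ⟨n, hx, hy⟩ := hmem2 x y
    rw [hF hx, hF hy, hF ((P n).dom.inf_mem hx hy), (P n).map_inf hx hy]
  · show F ⊥ = ⊥
    exact (P (N ⊥)).map_bot
  · intro x y
    show F (x ⇨ y) = F x ⇨ F y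
    obtain ⟨n, hx, hy⟩ := hmem2 x y
    rw [hF hx, hF hy, hF ((P n).dom.himp_mem hx hy), (P n).map_himp hx hy]
  · intro x y hxy
    obtain ⟨n, hx, hy⟩ := hmem2 x y
    have hFeq : F x = F y := hxy
    rw [hF hx, hF hy] at hFeq
    exact (P n).inj hx hy hFeq
  · intro y
    obtain ⟨n, rfl⟩ := he₂ y
    obtain ⟨x, hx, hfx⟩ := (hP n).2.2
    refine ⟨x, ?_⟩
    show F x = e₂ n
    exact (hF (n := n + 1) hx).trans hfx
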